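/- arXiv:2212.12433 — 9 statements merged into one kernel-verified Lean document; each statement's English description precedes it below -/
import Mathlib

section
/- Let S be a gr-C-2^A-secondary submodule of M and let I = ⊕_{g∈G} I_g and J = ⊕_{g∈G} J_g be graded ideals of Γ (where I_g = I ∩ Γ_g and J_g = J ∩ Γ_g). Then for every α, β ∈ G and every graded submodule L of M with I_α J_β S ⊆ L, either I_α S ⊆ L, or J_β S ⊆ L, or every product ab with a ∈ I_α and b ∈ J_β lies in Gr(Ann_Γ(S)). -/
open Pointwise DirectSum

section Preliminaries

variable {G : Type*} [AddGroup G] [DecidableEq G]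
variable {Γ : Type*} [CommRing Γ]
variable {M : Type*} [AddCommGroup M] [Module Γ M]

/-- `x` lies in the graded radical `Gr I`: for homogeneous `x` this is the defining
condition that some positive power of `x` lies in `I`. -/
def grMem (I : Ideal Γ) (x : Γ) : Prop := ∃ n : ℕ, 0 < n ∧ x ^ n ∈ I

variable (𝒜 : G → AddSubgroup Γ) (ℳ : G → AddSubgroup M)
variable [GradedRing 𝒜] [DirectSum.Decomposition ℳ] [SetLike.GradedSMul 𝒜 ℳ]

/-- A graded submodule: closed under taking homogeneous components. -/
def IsGradedSubmodule (S : Submodule Γ M) : Prop :=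
  ∀ (g : G) ⦃x : M⦄, x ∈ S → (DirectSum.decompose ℳ x g : M) ∈ S

/-- A graded ideal: closed under taking homogeneous components. -/
def IsGradedIdeal (I : Ideal Γ) : Prop :=
  ∀ (g : G) ⦃x : Γ⦄, x ∈ I → (DirectSum.decompose 𝒜 x g : Γ) ∈ I

/-- A graded classical 2-absorbing secondary (gr-C-2^A-secondary) submodule:
a nonzero graded submodule `S` such that whenever `r, s` are homogeneous and `L` is a
graded submodule with `r*s • S ⊆ L`, either `r • S ⊆ L`, or `s • S ⊆ L`, or
`r*s ∈ Gr(Ann S)`. -/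
def IsGrC2ASecondary (S : Submodule Γ M) : Prop :=
  S ≠ ⊥ ∧ IsGradedSubmodule ℳ S ∧
    ∀ r s : Γ, SetLike.IsHomogeneousElem 𝒜 r → SetLike.IsHomogeneousElem 𝒜 s →
      ∀ L : Submodule Γ M, IsGradedSubmodule ℳ L →
        (r * s) • S ≤ L →
          r • S ≤ L ∨ s • S ≤ L ∨ grMem S.annihilator (r * s)

end Preliminaries

variable {G : Type*} [AddGroup G] [DecidableEq G]
variable {Γ : Type*} [CommRing Γ]
variable {M : Type*} [AddCommGroup M] [Module Γ M]
variable (𝒜 : G → AddSubgroup Γ) (ℳ : G → AddSubgroup M)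
variable [GradedRing 𝒜] [DirectSum.Decomposition ℳ] [SetLike.GradedSMul 𝒜 ℳ]

lemma aux_add_smul_le {x y : Γ} {S L : Submodule Γ M} (hx : x • S ≤ L)
    (hy : y • S ≤ L) : (x + y) • S ≤ L := by
  intro z hz
  obtain ⟨m, hm, rfl⟩ := Set.mem_smul_set.mp hz
  rw [add_smul]
  exact L.add_mem (hx (Submodule.smul_mem_pointwise_smul m x S hm))
    (hy (Submodule.smul_mem_pointwise_smul m y S hm))

lemma aux_cancel_smul_le {x y : Γ} {S L : Submodule Γ M} (hx : x • S ≤ L)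
    (hxy : (x + y) • S ≤ L) : y • S ≤ L := by
  intro z hz
  obtain ⟨m, hm, rfl⟩ := Set.mem_smul_set.mp hz
  have : y • m = (x + y) • m - x • m := by rw [add_smul]; abel
  rw [this]
  exact L.sub_mem (hxy (Submodule.smul_mem_pointwise_smul m (x + y) S hm))
    (hx (Submodule.smul_mem_pointwise_smul m x S hm))

lemma aux_grMem_iff {I : Ideal Γ} {x : Γ} : grMem I x ↔ x ∈ I.radical := by
  constructor
  · rintro ⟨n, _, hn⟩; exact ⟨n, hn⟩
  · rintro ⟨n, hn⟩
    rcases Nat.eq_zero_or_pos n with rfl | hpos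
    · refine ⟨1, one_pos, ?_⟩
      rw [pow_one, ← mul_one x]
      exact I.mul_mem_left x (by simpa using hn)
    · exact ⟨n, hpos, hn⟩

/-- If `S` is a gr-C-2^A-secondary submodule of `M`, `I, J` are graded ideals of `Γ`,
`α β : G`, and `L` is a graded submodule with `I_α J_β S ⊆ L`, then `I_α S ⊆ L`, or
`J_β S ⊆ L`, or every product `a*b` with `a ∈ I_α`, `b ∈ J_β` lies in `Gr(Ann S)`. -/
theorem stmt0 (S : Submodule Γ M) (hS : IsGrC2ASecondary 𝒜 ℳ S)
    (I J : Ideal Γ) (hI : IsGradedIdeal 𝒜 I) (hJ : IsGradedIdeal 𝒜 J)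
    (α β : G) (L : Submodule Γ M) (hL : IsGradedSubmodule ℳ L)
    (h : ∀ a ∈ I, a ∈ 𝒜 α → ∀ b ∈ J, b ∈ 𝒜 β → (a * b) • S ≤ L) :
    (∀ a ∈ I, a ∈ 𝒜 α → a • S ≤ L) ∨
    (∀ b ∈ J, b ∈ 𝒜 β → b • S ≤ L) ∨
    (∀ a ∈ I, a ∈ 𝒜 α → ∀ b ∈ J, b ∈ 𝒜 β → grMem S.annihilator (a * b)) := by
  by_cases hA : ∀ a ∈ I, a ∈ 𝒜 α → a • S ≤ L
  · exact Or.inl hA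
  by_cases hB : ∀ b ∈ J, b ∈ 𝒜 β → b • S ≤ L
  · exact Or.inr (Or.inl hB)
  right; right
  push_neg at hA hB
  obtain ⟨a1, ha1I, ha1α, ha1L⟩ := hA
  obtain ⟨b1, hb1J, hb1β, hb1L⟩ := hB
  have P := hS.2.2
  -- key: for any homogeneous r ∈ I_α, s ∈ J_β whose smuls don't land in L,
  -- the product is in the radical
  have key : ∀ r s : Γ, r ∈ 𝒜 α → s ∈ 𝒜 β → (r * s) • S ≤ L →
      ¬ r • S ≤ L → ¬ s • S ≤ L → r * s ∈ S.annihilator.radical := by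
    intro r s hrα hsβ hrs hr hs
    rcases P r s ⟨α, hrα⟩ ⟨β, hsβ⟩ L hL hrs with h1 | h1 | h1
    · exact absurd h1 hr
    · exact absurd h1 hs
    · exact aux_grMem_iff.mp h1
  intro a haI haα b hbJ hbβ
  rw [aux_grMem_iff]
  by_cases haL : a • S ≤ L <;> by_cases hbL : b • S ≤ L
  · -- a • S ≤ L and b • S ≤ L
    have hna : ¬ (a + a1) • S ≤ L := fun hc => ha1L (aux_cancel_smul_le haL hc)
    have hnb : ¬ (b + b1) • S ≤ L := fun hc => hb1L (aux_cancel_smul_le hbL hc)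
    have ha1I' : a + a1 ∈ I := I.add_mem haI ha1I
    have hb1J' : b + b1 ∈ J := J.add_mem hbJ hb1J
    have haα' : a + a1 ∈ 𝒜 α := (𝒜 α).add_mem haα ha1α
    have hbβ' : b + b1 ∈ 𝒜 β := (𝒜 β).add_mem hbβ hb1β
    have hprod : ((a + a1) * (b + b1)) • S ≤ L := by
      have : (a + a1) * (b + b1) = a * b + (a * b1 + (a1 * b + a1 * b1)) := by ring
      rw [this]
      exact aux_add_smul_le (h a haI haα b hbJ hbβ)
        (aux_add_smul_le (h a haI haα b1 hb1J hb1β)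
          (aux_add_smul_le (h a1 ha1I ha1α b hbJ hbβ) (h a1 ha1I ha1α b1 hb1J hb1β)))
    have g1 := key _ _ haα' hbβ' hprod hna hnb
    have g2 := key _ _ haα' hb1β (by
        have : (a + a1) * b1 = a * b1 + a1 * b1 := by ring
        rw [this]
        exact aux_add_smul_le (h a haI haα b1 hb1J hb1β) (h a1 ha1I ha1α b1 hb1J hb1β))
      hna hb1L
    have g3 := key _ _ ha1α hbβ' (by
        have : a1 * (b + b1) = a1 * b + a1 * b1 := by ring
        rw [this]
        exact aux_add_smul_le (h a1 ha1I ha1α b hbJ hbβ) (h a1 ha1I ha1α b1 hb1J hb1β))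
      ha1L hnb
    have g0 := key _ _ ha1α hb1β (h a1 ha1I ha1α b1 hb1J hb1β) ha1L hb1L
    have : a * b = (a + a1) * (b + b1) - (a + a1) * b1 - a1 * (b + b1) + a1 * b1 := by
      ring
    rw [this]
    exact Ideal.add_mem _ (Ideal.sub_mem _ (Ideal.sub_mem _ g1 g2) g3) g0
  · -- a • S ≤ L, ¬ b • S ≤ L
    have hna : ¬ (a + a1) • S ≤ L := fun hc => ha1L (aux_cancel_smul_le haL hc)
    have haα' : a + a1 ∈ 𝒜 α := (𝒜 α).add_mem haα ha1α
    have g1 := key _ _ haα' hbβ (by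
        have : (a + a1) * b = a * b + a1 * b := by ring
        rw [this]
        exact aux_add_smul_le (h a haI haα b hbJ hbβ) (h a1 ha1I ha1α b hbJ hbβ))
      hna hbL
    have g2 := key _ _ ha1α hbβ (h a1 ha1I ha1α b hbJ hbβ) ha1L hbL
    have : a * b = (a + a1) * b - a1 * b := by ring
    rw [this]
    exact Ideal.sub_mem _ g1 g2
  · -- ¬ a • S ≤ L, b • S ≤ L
    have hnb : ¬ (b + b1) • S ≤ L := fun hc => hb1L (aux_cancel_smul_le hbL hc)
    have hbβ' : b + b1 ∈ 𝒜 β := (𝒜 β).add_mem hbβ hb1β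
    have g1 := key _ _ haα hbβ' (by
        have : a * (b + b1) = a * b + a * b1 := by ring
        rw [this]
        exact aux_add_smul_le (h a haI haα b hbJ hbβ) (h a haI haα b1 hb1J hb1β))
      haL hnb
    have g2 := key _ _ haα hb1β (h a haI haα b1 hb1J hb1β) haL hb1L
    have : a * b = a * (b + b1) - a * b1 := by ring
    rw [this]
    exact Ideal.sub_mem _ g1 g2
  · exact key _ _ haα hbβ (h a haI haα b hbJ hbβ) haL hbL
end

section
/- Let S be a gr-C-2^A-secondary submodule of M. Then for all homogeneous elements a, b ∈ Γ, either abS = aS, or abS = bS, or ab ∈ Gr(Ann_Γ(S)). -/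
open Pointwise DirectSum

section Aux

variable {G : Type*} [AddGroup G] [DecidableEq G]
variable {Γ : Type*} [CommRing Γ]
variable {M : Type*} [AddCommGroup M] [Module Γ M]
variable (𝒜 : G → AddSubgroup Γ) (ℳ : G → AddSubgroup M)
variable [GradedRing 𝒜] [DirectSum.Decomposition ℳ] [SetLike.GradedSMul 𝒜 ℳ]

theorem coe_decompose_smul_add_of_mem {i : G} {c : Γ} (hc : c ∈ 𝒜 i) (x : M) (g : G) :
    (DirectSum.decompose ℳ (c • x) (i + g) : M) = c • (DirectSum.decompose ℳ x g : M) := by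
  induction x using DirectSum.Decomposition.inductionOn ℳ with
  | zero => simp
  | homogeneous m =>
    rename_i h
    obtain ⟨m, hm⟩ := m
    have hcm : c • m ∈ ℳ (i + h) := SetLike.GradedSMul.smul_mem hc hm
    rcases eq_or_ne h g with rfl | hne
    · rw [DirectSum.decompose_of_mem_same ℳ hm,
        DirectSum.decompose_of_mem_same ℳ hcm]
    · rw [DirectSum.decompose_of_mem_ne ℳ hm hne,
        DirectSum.decompose_of_mem_ne ℳ hcm (by simpa using hne), smul_zero]
  | add x y hx hy =>
    rw [smul_add, DirectSum.decompose_add, DirectSum.decompose_add]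
    simp only [DirectSum.add_apply, AddSubgroup.coe_add, hx, hy, smul_add]

theorem isGraded_smul {c : Γ} (hc : SetLike.IsHomogeneousElem 𝒜 c) {S : Submodule Γ M}
    (hS : IsGradedSubmodule ℳ S) : IsGradedSubmodule ℳ (c • S) := by
  obtain ⟨i, hc⟩ := hc
  intro g x hx
  obtain ⟨y, hy, rfl⟩ := hx
  obtain ⟨g', rfl⟩ : ∃ g', g = i + g' := ⟨-i + g, by rw [← add_assoc]; simp⟩
  show (DirectSum.decompose ℳ (c • y) (i + g') : M) ∈ c • S
  rw [coe_decompose_smul_add_of_mem 𝒜 ℳ hc]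
  exact Submodule.smul_mem_pointwise_smul _ _ _ (hS g' hy)

end Aux

variable {G : Type*} [AddGroup G] [DecidableEq G]
variable {Γ : Type*} [CommRing Γ]
variable {M : Type*} [AddCommGroup M] [Module Γ M]
variable (𝒜 : G → AddSubgroup Γ) (ℳ : G → AddSubgroup M)
variable [GradedRing 𝒜] [DirectSum.Decomposition ℳ] [SetLike.GradedSMul 𝒜 ℳ]

/-- If `S` is a gr-C-2^A-secondary submodule of `M`, then for all homogeneous `a, b`,
either `a*b • S = a • S`, or `a*b • S = b • S`, or `a*b ∈ Gr(Ann S)`. -/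
theorem stmt1 (S : Submodule Γ M) (hS : IsGrC2ASecondary 𝒜 ℳ S)
    (a b : Γ) (ha : SetLike.IsHomogeneousElem 𝒜 a) (hb : SetLike.IsHomogeneousElem 𝒜 b) :
    (a * b) • S = a • S ∨ (a * b) • S = b • S ∨ grMem S.annihilator (a * b) := by
  obtain ⟨-, hSg, h2⟩ := hS
  have hab : SetLike.IsHomogeneousElem 𝒜 (a * b) := SetLike.IsHomogeneousElem.mul ha hb
  have hLg : IsGradedSubmodule ℳ ((a * b) • S) := isGraded_smul 𝒜 ℳ hab hSg
  have hle : ∀ c : Γ, c • S ≤ S := fun c x hx => by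
    obtain ⟨y, hy, rfl⟩ := hx; exact S.smul_mem c hy
  have h1 : (a * b) • S ≤ a • S := by
    rw [mul_smul]; exact smul_mono_right a (hle b)
  have h1' : (a * b) • S ≤ b • S := by
    rw [mul_comm, mul_smul]; exact smul_mono_right b (hle a)
  rcases h2 a b ha hb ((a * b) • S) hLg le_rfl with h | h | h
  · exact Or.inl (le_antisymm h1 h)
  · exact Or.inr (Or.inl (le_antisymm h1' h))
  · exact Or.inr (Or.inr h)
end

section
/- Let S be a gr-C-2^A-secondary submodule of M. Then Ann_Γ(S) is a gr-2^A-primary ideal of Γ, i.e., Ann_Γ(S) is a proper ideal and for all homogeneous r, s, t ∈ Γ with rst ∈ Ann_Γ(S), either rs ∈ Ann_Γ(S), or rt ∈ Gr(Ann_Γ(S)), or st ∈ Gr(Ann_Γ(S)). -/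
open Pointwise DirectSum

variable {G : Type*} [AddGroup G] [DecidableEq G]
variable {Γ : Type*} [CommRing Γ]
variable {M : Type*} [AddCommGroup M] [Module Γ M]
variable (𝒜 : G → AddSubgroup Γ) (ℳ : G → AddSubgroup M)
variable [GradedRing 𝒜] [DirectSum.Decomposition ℳ] [SetLike.GradedSMul 𝒜 ℳ]

lemma smul_decompose_eq {s : Γ} {i : G} (hs : s ∈ 𝒜 i) (x : M) (g : G) :
    s • (DirectSum.decompose ℳ x g : M) = (DirectSum.decompose ℳ (s • x) (i + g) : M) := by
  induction x using DirectSum.Decomposition.inductionOn ℳ with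
  | zero => simp
  | @homogeneous h m =>
      have hmem : s • (m : M) ∈ ℳ (i + h) := by
        simpa [vadd_eq_add] using SetLike.GradedSMul.smul_mem hs m.2
      by_cases hgh : g = h
      · subst hgh
        rw [DirectSum.decompose_of_mem_same ℳ m.2, DirectSum.decompose_of_mem_same ℳ hmem]
      · rw [DirectSum.decompose_of_mem_ne ℳ m.2 (Ne.symm hgh),
          DirectSum.decompose_of_mem_ne ℳ hmem
            (fun hc => hgh (add_right_injective i hc).symm), smul_zero]
  | add m m' hm hm' =>
      rw [smul_add, DirectSum.decompose_add, DirectSum.decompose_add, DirectSum.add_apply,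
        DirectSum.add_apply]
      push_cast
      rw [smul_add, hm, hm']

/-- If `S` is a gr-C-2^A-secondary submodule of `M`, then `Ann S` is a
gr-2^A-primary ideal of `Γ`. -/
theorem stmt2 (S : Submodule Γ M) (hS : IsGrC2ASecondary 𝒜 ℳ S) :
    S.annihilator ≠ ⊤ ∧
      ∀ r s t : Γ, SetLike.IsHomogeneousElem 𝒜 r → SetLike.IsHomogeneousElem 𝒜 s →
        SetLike.IsHomogeneousElem 𝒜 t → r * s * t ∈ S.annihilator →
          r * s ∈ S.annihilator ∨ grMem S.annihilator (r * t) ∨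
            grMem S.annihilator (s * t) := by
  obtain ⟨hne, hgr, habs⟩ := hS
  constructor
  · intro htop
    apply hne
    ext x
    simp only [Submodule.mem_bot]
    constructor
    · intro hx
      have h1 : (1 : Γ) ∈ S.annihilator := htop ▸ Submodule.mem_top
      simpa using (Submodule.mem_annihilator.mp h1) x hx
    · rintro rfl; exact S.zero_mem
  · intro r s t hr hs ht hrst
    obtain ⟨i, hsi⟩ := hs
    -- L is the s-torsion submodule, graded since s is homogeneous
    set L : Submodule Γ M := Submodule.torsionBy Γ M s with hL
    have hLgr : IsGradedSubmodule ℳ L := by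
      intro g x hx
      rw [Submodule.mem_torsionBy_iff] at hx ⊢
      rw [smul_decompose_eq 𝒜 ℳ hsi, hx]
      simp
    have hsub : (r * t) • S ≤ L := by
      intro m hm
      obtain ⟨x, hx, rfl⟩ := (by rw [← SetLike.mem_coe, Submodule.coe_pointwise_smul] at hm; exact hm : m ∈ (r*t) • (S : Set M))
      rw [Submodule.mem_torsionBy_iff, ← mul_smul]
      have : s * (r * t) = r * s * t := by ring
      rw [this]
      exact (Submodule.mem_annihilator.mp hrst) x hx
    rcases habs r t hr ht L hLgr hsub with h1 | h2 | h3
    · left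
      rw [Submodule.mem_annihilator]
      intro x hx
      have : r • x ∈ L := h1 (Submodule.smul_mem_pointwise_smul x r S hx)
      rw [Submodule.mem_torsionBy_iff] at this
      calc (r * s) • x = s • r • x := by rw [← mul_smul, mul_comm]
        _ = 0 := this
    · right; right
      refine ⟨1, one_pos, ?_⟩
      rw [pow_one, Submodule.mem_annihilator]
      intro x hx
      have : t • x ∈ L := h2 (Submodule.smul_mem_pointwise_smul x t S hx)
      rw [Submodule.mem_torsionBy_iff] at this
      calc (s * t) • x = s • t • x := mul_smul s t x
        _ = 0 := this
    · right; left; exact h3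
end

section
/- Let S be a gr-C-2^A-secondary submodule of M. Then Gr(Ann_Γ(S)) is a gr-2^A ideal of Γ, i.e., for all homogeneous a, b, c ∈ Γ with abc ∈ Gr(Ann_Γ(S)), either ab ∈ Gr(Ann_Γ(S)), or ac ∈ Gr(Ann_Γ(S)), or bc ∈ Gr(Ann_Γ(S)) (and Gr(Ann_Γ(S)) is a proper ideal). -/
open Pointwise DirectSum

variable {G : Type*} [AddGroup G] [DecidableEq G]
variable {Γ : Type*} [CommRing Γ]
variable {M : Type*} [AddCommGroup M] [Module Γ M]
variable (𝒜 : G → AddSubgroup Γ) (ℳ : G → AddSubgroup M)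
variable [GradedRing 𝒜] [DirectSum.Decomposition ℳ] [SetLike.GradedSMul 𝒜 ℳ]

omit [GradedRing 𝒜] in
lemma aux_decompose_smul {c : Γ} {i : G} (hc : c ∈ 𝒜 i) (x : M) (g : G) :
    (DirectSum.decompose ℳ (c • x) (i + g) : M) = c • (DirectSum.decompose ℳ x g : M) := by
  induction x using DirectSum.Decomposition.inductionOn ℳ with
  | zero => simp
  | @homogeneous h m =>
    obtain ⟨m, hm⟩ := m
    by_cases hgh : g = h
    · subst hgh
      rw [DirectSum.decompose_of_mem_same ℳ hm,
        DirectSum.decompose_of_mem_same ℳ (show c • m ∈ ℳ (i+g) from SetLike.GradedSMul.smul_mem hc hm)]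
    · rw [DirectSum.decompose_of_mem_ne ℳ hm (Ne.symm hgh),
        DirectSum.decompose_of_mem_ne ℳ (show c • m ∈ ℳ (i+h) from SetLike.GradedSMul.smul_mem hc hm)
          (fun h' => hgh (add_left_cancel h').symm), smul_zero]
  | add x y hx hy =>
    rw [smul_add, DirectSum.decompose_add, DirectSum.decompose_add]
    simp only [DirectSum.add_apply, AddSubgroup.coe_add, hx, hy, smul_add]

/-- If `S` is a gr-C-2^A-secondary submodule of `M`, then `Gr(Ann S)` is a
gr-2^A (graded 2-absorbing) ideal of `Γ`: it is proper (the homogeneous element `1`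
does not lie in it) and for all homogeneous `a, b, c` with `a*b*c ∈ Gr(Ann S)`,
either `a*b ∈ Gr(Ann S)`, or `a*c ∈ Gr(Ann S)`, or `b*c ∈ Gr(Ann S)`. -/
theorem stmt3 (S : Submodule Γ M) (hS : IsGrC2ASecondary 𝒜 ℳ S) :
    ¬ grMem S.annihilator 1 ∧
      ∀ a b c : Γ, SetLike.IsHomogeneousElem 𝒜 a → SetLike.IsHomogeneousElem 𝒜 b →
        SetLike.IsHomogeneousElem 𝒜 c → grMem S.annihilator (a * b * c) →
          grMem S.annihilator (a * b) ∨ grMem S.annihilator (a * c) ∨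
            grMem S.annihilator (b * c) := by
  obtain ⟨hne, hgrS, hprop⟩ := hS
  constructor
  · rintro ⟨n, hn, h1⟩
    rw [one_pow, Submodule.mem_annihilator] at h1
    exact hne (Submodule.eq_bot_iff S |>.2 fun m hm => by simpa using h1 m hm)
  · rintro a b c ⟨ia, hia⟩ ⟨ib, hib⟩ ⟨ic, hic⟩ ⟨n, hn, habc⟩
    set L : Submodule Γ M := LinearMap.ker (LinearMap.lsmul Γ M (c ^ n)) with hL
    have hmemL : ∀ x : M, x ∈ L ↔ (c ^ n) • x = 0 := fun x => Iff.rfl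
    have hcn : c ^ n ∈ 𝒜 (n • ic) := SetLike.pow_mem_graded n hic
    have hLgr : IsGradedSubmodule ℳ L := by
      intro g x hx
      have := aux_decompose_smul 𝒜 ℳ hcn (x : M) g
      rw [(hmemL x).1 hx] at this
      exact (hmemL _).2 (by rw [← this]; simp)
    have hle : (a ^ n * b ^ n) • S ≤ L := by
      intro x hx
      obtain ⟨y, hy, rfl⟩ := Set.mem_smul_set.1 hx
      refine (hmemL _).2 ?_
      have : (a * b * c) ^ n • y = 0 := by
        rw [Submodule.mem_annihilator] at habc
        exact habc y hy
      rw [smul_smul, ← this]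
      ring_nf
    rcases hprop (a ^ n) (b ^ n) ⟨_, SetLike.pow_mem_graded n hia⟩
        ⟨_, SetLike.pow_mem_graded n hib⟩ L hLgr hle with h | h | h
    · right; left
      refine ⟨n, hn, Submodule.mem_annihilator.2 fun y hy => ?_⟩
      have : a ^ n • y ∈ L := h (Submodule.smul_mem_pointwise_smul y (a ^ n) S hy)
      have := (hmemL _).1 this
      rw [smul_smul] at this
      rw [← this]; ring_nf
    · right; right
      refine ⟨n, hn, Submodule.mem_annihilator.2 fun y hy => ?_⟩
      have : b ^ n • y ∈ L := h (Submodule.smul_mem_pointwise_smul y (b ^ n) S hy)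
      have := (hmemL _).1 this
      rw [smul_smul] at this
      rw [← this]; ring_nf
    · left
      obtain ⟨m, hm, hmem⟩ := h
      refine ⟨n * m, Nat.mul_pos hn hm, ?_⟩
      have : (a * b) ^ (n * m) = (a ^ n * b ^ n) ^ m := by ring
      rw [this]; exact hmem
end

section
/- Let M be a gr-comultiplication Γ-module such that for every graded prime ideal P of Γ containing Ann_Γ(M) there exists a gr-second submodule N of M with Ann_Γ(N) = P (i.e., the natural map of GSpec^s(M) is surjective). If S is a gr-C-2^A-secondary submodule of M, then GSec(S) is a gr-S-2^A-second submodule of M. -/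
open Pointwise DirectSum

variable {G : Type*} [AddGroup G] [DecidableEq G]
variable {Γ : Type*} [CommRing Γ]
variable {M : Type*} [AddCommGroup M] [Module Γ M]
variable (𝒜 : G → AddSubgroup Γ) (ℳ : G → AddSubgroup M)
variable [GradedRing 𝒜] [DirectSum.Decomposition ℳ] [SetLike.GradedSMul 𝒜 ℳ]

/-- A graded prime ideal: a proper graded ideal such that for homogeneous `a, b`,
`a*b ∈ P` implies `a ∈ P` or `b ∈ P`. -/
def IsGradedPrime (P : Ideal Γ) : Prop :=
  IsGradedIdeal 𝒜 P ∧ P ≠ ⊤ ∧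
    ∀ a b : Γ, SetLike.IsHomogeneousElem 𝒜 a → SetLike.IsHomogeneousElem 𝒜 b →
      a * b ∈ P → a ∈ P ∨ b ∈ P

/-- A gr-second submodule: a nonzero graded submodule `N` such that every homogeneous
`r` satisfies `r • N = N` or `r • N = 0`. -/
def IsGrSecond (N : Submodule Γ M) : Prop :=
  N ≠ ⊥ ∧ IsGradedSubmodule ℳ N ∧
    ∀ r : Γ, SetLike.IsHomogeneousElem 𝒜 r → r • N = N ∨ r • N = ⊥

/-- `GSec S`: the sum of all gr-second submodules of `M` contained in `S`. -/
def GSec (S : Submodule Γ M) : Submodule Γ M :=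
  sSup {N : Submodule Γ M | IsGrSecond 𝒜 ℳ N ∧ N ≤ S}

/-- A completely graded irreducible submodule: a proper graded submodule `V` such that
whenever `V` is the intersection of a family of graded submodules, `V` is a member of
that family. -/
def IsCGIrreducible (V : Submodule Γ M) : Prop :=
  V ≠ ⊤ ∧ IsGradedSubmodule ℳ V ∧
    ∀ F : Set (Submodule Γ M), (∀ W ∈ F, IsGradedSubmodule ℳ W) →
      V = sInf F → V ∈ F

/-- A graded strongly 2-absorbing second (gr-S-2^A-second) submodule. -/
def IsGrS2ASecond (N : Submodule Γ M) : Prop :=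
  N ≠ ⊥ ∧ IsGradedSubmodule ℳ N ∧
    ∀ a b : Γ, SetLike.IsHomogeneousElem 𝒜 a → SetLike.IsHomogeneousElem 𝒜 b →
      ∀ V₁ V₂ : Submodule Γ M, IsCGIrreducible ℳ V₁ → IsCGIrreducible ℳ V₂ →
        (a * b) • N ≤ V₁ ⊓ V₂ →
          a • N ≤ V₁ ⊓ V₂ ∨ b • N ≤ V₁ ⊓ V₂ ∨ a * b ∈ N.annihilator


/-! ### Auxiliary lemmas -/

section DecomposeLemmas

lemma decompose_smul_right' (r : Γ) {j : G} {m : M} (hm : m ∈ ℳ j) (g : G) :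
    (DirectSum.decompose ℳ (r • m) (g + j) : M) = (DirectSum.decompose 𝒜 r g : Γ) • m := by
  classical
  have hrm : r • m = ∑ i ∈ (decompose 𝒜 r).support, ((decompose 𝒜 r i : Γ) • m) := by
    conv_lhs => rw [← DirectSum.sum_support_decompose 𝒜 r]
    rw [Finset.sum_smul]
  rw [hrm, DirectSum.decompose_sum, DFinsupp.finset_sum_apply,
    AddSubmonoidClass.coe_finset_sum]
  rw [Finset.sum_eq_single g]
  · exact DirectSum.decompose_of_mem_same ℳ
      (SetLike.GradedSMul.smul_mem (SetLike.coe_mem (decompose 𝒜 r g)) hm)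
  · intro i _ hig
    exact DirectSum.decompose_of_mem_ne ℳ
      (SetLike.GradedSMul.smul_mem (SetLike.coe_mem (decompose 𝒜 r i)) hm)
      (fun h => hig (add_right_cancel h))
  · intro hg
    rw [DFinsupp.notMem_support_iff.1 hg]
    simp

lemma decompose_smul_left' {i : G} {r : Γ} (hr : r ∈ 𝒜 i) (s : M) (g : G) :
    (DirectSum.decompose ℳ (r • s) (i + g) : M) = r • (DirectSum.decompose ℳ s g : M) := by
  classical
  have hrs : r • s = ∑ h ∈ (decompose ℳ s).support, (r • (decompose ℳ s h : M)) := by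
    conv_lhs => rw [← DirectSum.sum_support_decompose ℳ s]
    rw [Finset.smul_sum]
  rw [hrs, DirectSum.decompose_sum, DFinsupp.finset_sum_apply,
    AddSubmonoidClass.coe_finset_sum]
  rw [Finset.sum_eq_single g]
  · exact DirectSum.decompose_of_mem_same ℳ
      (SetLike.GradedSMul.smul_mem hr (SetLike.coe_mem (decompose ℳ s g)))
  · intro h _ hhg
    exact DirectSum.decompose_of_mem_ne ℳ
      (SetLike.GradedSMul.smul_mem hr (SetLike.coe_mem (decompose ℳ s h)))
      (fun hh => hhg (add_left_cancel hh))
  · intro hg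
    rw [DFinsupp.notMem_support_iff.1 hg]
    simp

end DecomposeLemmas

section PointwiseLemmas

lemma mem_psmul {a : Γ} {S : Submodule Γ M} {x : M} :
    x ∈ a • S ↔ ∃ s ∈ S, a • s = x := by
  rw [← SetLike.mem_coe, Submodule.coe_pointwise_smul]
  exact Set.mem_smul_set

lemma psmul_le_iff {a : Γ} {S L : Submodule Γ M} :
    a • S ≤ L ↔ ∀ s ∈ S, a • s ∈ L := by
  constructor
  · intro h s hs
    exact h (Submodule.smul_mem_pointwise_smul s a S hs)
  · intro h x hx
    obtain ⟨s, hs, rfl⟩ := mem_psmul.1 hx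
    exact h s hs

lemma psmul_mono {a : Γ} {S S' : Submodule Γ M} (h : S ≤ S') : a • S ≤ a • S' := by
  rw [psmul_le_iff]
  exact fun s hs => Submodule.smul_mem_pointwise_smul s a S' (h hs)

lemma ann_mono {S S' : Submodule Γ M} (h : S ≤ S') : S'.annihilator ≤ S.annihilator := by
  intro r hr
  rw [Submodule.mem_annihilator] at hr ⊢
  exact fun n hn => hr n (h hn)

lemma smul_eq_bot_of_mem_ann {r : Γ} {N : Submodule Γ M} (h : r ∈ N.annihilator) :
    r • N = ⊥ := by
  refine le_antisymm ?_ bot_le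
  rw [psmul_le_iff]
  intro n hn
  rw [Submodule.mem_bot]
  exact Submodule.mem_annihilator.1 h n hn

end PointwiseLemmas

section HomogLemmas

lemma hom_pow {a : Γ} (ha : SetLike.IsHomogeneousElem 𝒜 a) (n : ℕ) :
    SetLike.IsHomogeneousElem 𝒜 (a ^ n) := by
  induction n with
  | zero => rw [pow_zero]; exact SetLike.isHomogeneousElem_one 𝒜
  | succ n ih => rw [pow_succ]; exact SetLike.IsHomogeneousElem.mul ih ha

lemma second_one_not_mem {N : Submodule Γ M} (hne : N ≠ ⊥) : (1:Γ) ∉ N.annihilator := by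
  intro h
  apply hne
  rw [eq_bot_iff]
  intro n hn
  have h1 := Submodule.mem_annihilator.1 h n hn
  rw [one_smul] at h1
  exact (Submodule.mem_bot Γ).2 h1

lemma second_smul_eq {N : Submodule Γ M} (hN : IsGrSecond 𝒜 ℳ N) {r : Γ}
    (hr : SetLike.IsHomogeneousElem 𝒜 r) (h : r ∉ N.annihilator) : r • N = N := by
  rcases hN.2.2 r hr with h1 | h1
  · exact h1
  · exfalso
    apply h
    rw [Submodule.mem_annihilator]
    intro n hn
    have h2 : r • n ∈ r • N := Submodule.smul_mem_pointwise_smul n r N hn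
    rw [h1] at h2
    exact (Submodule.mem_bot Γ).1 h2

lemma second_ann_prime {N : Submodule Γ M} (hN : IsGrSecond 𝒜 ℳ N) {u v : Γ}
    (hu : SetLike.IsHomogeneousElem 𝒜 u) (hv : SetLike.IsHomogeneousElem 𝒜 v)
    (huv : u * v ∈ N.annihilator) :
    u ∈ N.annihilator ∨ v ∈ N.annihilator := by
  by_contra h
  push_neg at h
  have h1 := second_smul_eq 𝒜 ℳ hN hu h.1
  have h2 := second_smul_eq 𝒜 ℳ hN hv h.2
  have h3 : (u * v) • N = N := by rw [mul_smul, h2, h1]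
  have hbot := smul_eq_bot_of_mem_ann huv
  exact hN.1 (by rw [← h3, hbot])

lemma second_ann_pow_prime {N : Submodule Γ M} (hN : IsGrSecond 𝒜 ℳ N) {x : Γ}
    (hx : SetLike.IsHomogeneousElem 𝒜 x) (n : ℕ) (h : x ^ n ∈ N.annihilator) :
    x ∈ N.annihilator := by
  induction n with
  | zero =>
    rw [pow_zero] at h
    exact absurd h (second_one_not_mem hN.1)
  | succ n ih =>
    rw [pow_succ] at h
    rcases second_ann_prime 𝒜 ℳ hN (hom_pow 𝒜 hx n) hx h with h | h
    · exact ih h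
    · exact h

end HomogLemmas

section GradedIdealLemmas

lemma isGradedIdeal_annihilator {S : Submodule Γ M} (hS : IsGradedSubmodule ℳ S) :
    IsGradedIdeal 𝒜 S.annihilator := by
  intro g r hr
  rw [Submodule.mem_annihilator] at hr ⊢
  intro m hm
  classical
  have hm' : m = ∑ h ∈ (decompose ℳ m).support, (decompose ℳ m h : M) :=
    (DirectSum.sum_support_decompose ℳ m).symm
  rw [hm', Finset.smul_sum]
  refine Finset.sum_eq_zero fun h _ => ?_
  have e := decompose_smul_right' 𝒜 ℳ r (SetLike.coe_mem (decompose ℳ m h)) g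
  rw [← e, hr _ (hS h hm)]
  simp

lemma isGradedIdeal_span_singleton {u : Γ} (hu : SetLike.IsHomogeneousElem 𝒜 u) :
    IsGradedIdeal 𝒜 (Ideal.span {u}) := by
  obtain ⟨d, hud⟩ := hu
  intro g x hx
  obtain ⟨r, rfl⟩ := Ideal.mem_span_singleton'.1 hx
  have hg : g - d + d = g := by
    rw [sub_eq_add_neg, add_assoc, neg_add_cancel, add_zero]
  have e := decompose_smul_right' 𝒜 𝒜 r hud (g - d)
  rw [smul_eq_mul, smul_eq_mul] at e
  rw [← hg, e]
  exact Ideal.mem_span_singleton'.2 ⟨_, rfl⟩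

lemma isGradedIdeal_sup {I J : Ideal Γ} (hI : IsGradedIdeal 𝒜 I) (hJ : IsGradedIdeal 𝒜 J) :
    IsGradedIdeal 𝒜 (I ⊔ J) := by
  intro g x hx
  obtain ⟨y, hy, z, hz, rfl⟩ := Submodule.mem_sup.1 hx
  have e : (decompose 𝒜 (y + z) g : Γ) = (decompose 𝒜 y g : Γ) + (decompose 𝒜 z g : Γ) := by
    rw [DirectSum.decompose_add, DirectSum.add_apply]
    rfl
  rw [e]
  exact Submodule.add_mem _ (Submodule.mem_sup_left (hI g hy))
    (Submodule.mem_sup_right (hJ g hz))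

lemma isGradedSubmodule_psmul {a : Γ} (ha : SetLike.IsHomogeneousElem 𝒜 a) {S : Submodule Γ M}
    (hS : IsGradedSubmodule ℳ S) : IsGradedSubmodule ℳ (a • S) := by
  obtain ⟨i, hai⟩ := ha
  intro g x hx
  obtain ⟨s, hsS, rfl⟩ := mem_psmul.1 hx
  have hg : i + (-i + g) = g := add_neg_cancel_left i g
  have e := decompose_smul_left' 𝒜 ℳ hai s (-i + g)
  rw [hg] at e
  rw [e]
  exact Submodule.smul_mem_pointwise_smul _ _ _ (hS _ hsS)

lemma le_of_homogeneous_le {P Q : Ideal Γ} (hP : IsGradedIdeal 𝒜 P)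
    (h : ∀ x : Γ, SetLike.IsHomogeneousElem 𝒜 x → x ∈ P → x ∈ Q) : P ≤ Q := by
  intro x hx
  classical
  rw [← DirectSum.sum_support_decompose 𝒜 x]
  exact Submodule.sum_mem _ fun g _ => h _ ⟨g, SetLike.coe_mem _⟩ (hP g hx)

lemma exists_graded_prime (I : Ideal Γ) (hI : IsGradedIdeal 𝒜 I) (T : Set Γ)
    (hTh : ∀ t ∈ T, SetLike.IsHomogeneousElem 𝒜 t) (hT1 : (1:Γ) ∈ T)
    (hTm : ∀ t₁ ∈ T, ∀ t₂ ∈ T, t₁ * t₂ ∈ T) (hTI : ∀ t ∈ T, t ∉ I) :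
    ∃ P : Ideal Γ, IsGradedPrime 𝒜 P ∧ I ≤ P ∧ ∀ t ∈ T, t ∉ P := by
  have hzorn : ∀ c ⊆ {J : Ideal Γ | IsGradedIdeal 𝒜 J ∧ I ≤ J ∧ ∀ t ∈ T, t ∉ J},
      IsChain (· ≤ ·) c → ∀ y ∈ c,
      ∃ ub ∈ {J : Ideal Γ | IsGradedIdeal 𝒜 J ∧ I ≤ J ∧ ∀ t ∈ T, t ∉ J},
        ∀ z ∈ c, z ≤ ub := by
    intro c hcZ hchain y hyc
    have hne : c.Nonempty := ⟨y, hyc⟩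
    haveI : Nonempty c := hne.to_subtype
    have hmem : ∀ x : Γ, x ∈ sSup c → ∃ J ∈ c, x ∈ J := by
      intro x hx
      rw [sSup_eq_iSup'] at hx
      obtain ⟨⟨J, hJ⟩, hxJ⟩ := (Submodule.mem_iSup_of_directed _ hchain.directed).1 hx
      exact ⟨J, hJ, hxJ⟩
    refine ⟨sSup c, ⟨?_, ?_, ?_⟩, fun z hz => le_sSup hz⟩
    · intro g x hx
      obtain ⟨J, hJ, hxJ⟩ := hmem x hx
      exact le_sSup hJ ((hcZ hJ).1 g hxJ)
    · exact (hcZ hyc).2.1.trans (le_sSup hyc)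
    · intro t ht hmem'
      obtain ⟨J, hJ, hxJ⟩ := hmem t hmem'
      exact (hcZ hJ).2.2 t ht hxJ
  obtain ⟨P, hIP, hPmax⟩ := zorn_le_nonempty₀
    {J : Ideal Γ | IsGradedIdeal 𝒜 J ∧ I ≤ J ∧ ∀ t ∈ T, t ∉ J} hzorn I ⟨hI, le_rfl, hTI⟩
  obtain ⟨hPgr, hIleP, hPT⟩ := hPmax.1
  refine ⟨P, ⟨hPgr, ?_, ?_⟩, hIleP, hPT⟩
  · intro hPtop
    exact hPT 1 hT1 (hPtop ▸ Submodule.mem_top)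
  · intro a b ha hb hab
    by_contra hcon
    push_neg at hcon
    obtain ⟨haP, hbP⟩ := hcon
    have key : ∀ x : Γ, SetLike.IsHomogeneousElem 𝒜 x → x ∉ P →
        ∃ t ∈ T, t ∈ P ⊔ Ideal.span {x} := by
      intro x hx hxP
      by_contra hno
      push_neg at hno
      have hmemZ : P ⊔ Ideal.span {x} ∈
          {J : Ideal Γ | IsGradedIdeal 𝒜 J ∧ I ≤ J ∧ ∀ t ∈ T, t ∉ J} :=
        ⟨isGradedIdeal_sup 𝒜 hPgr (isGradedIdeal_span_singleton 𝒜 hx),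
          hIleP.trans le_sup_left, hno⟩
      have hle := hPmax.2 hmemZ le_sup_left
      exact hxP (hle (Submodule.mem_sup_right (Ideal.subset_span (Set.mem_singleton x))))
    obtain ⟨t₁, ht₁T, ht₁⟩ := key a ha haP
    obtain ⟨t₂, ht₂T, ht₂⟩ := key b hb hbP
    obtain ⟨p₁, hp₁, x₁, hx₁, hte₁⟩ := Submodule.mem_sup.1 ht₁
    obtain ⟨r, hr⟩ := Ideal.mem_span_singleton'.1 hx₁
    obtain ⟨p₂, hp₂, x₂, hx₂, hte₂⟩ := Submodule.mem_sup.1 ht₂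
    obtain ⟨s, hs⟩ := Ideal.mem_span_singleton'.1 hx₂
    have hmul : t₁ * t₂ ∈ P := by
      rw [← hte₁, ← hte₂, ← hr, ← hs]
      have e : (p₁ + r * a) * (p₂ + s * b)
          = p₁ * (p₂ + s * b) + (r * a) * p₂ + (r * s) * (a * b) := by ring
      rw [e]
      exact Submodule.add_mem _ (Submodule.add_mem _ (Ideal.mul_mem_right _ _ hp₁)
        (Ideal.mul_mem_left _ _ hp₂)) (Ideal.mul_mem_left _ _ hab)
    exact hPT _ (hTm _ ht₁T _ ht₂T) hmul

end GradedIdealLemmas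

section GSecLemmas

lemma le_GSec {S N : Submodule Γ M} (h1 : IsGrSecond 𝒜 ℳ N) (h2 : N ≤ S) :
    N ≤ GSec 𝒜 ℳ S := le_sSup ⟨h1, h2⟩

lemma GSec_induction {S : Submodule Γ M} {C : M → Prop}
    (hmem : ∀ N : Submodule Γ M, IsGrSecond 𝒜 ℳ N → N ≤ S → ∀ x ∈ N, C x)
    (h0 : C 0) (hadd : ∀ x y, C x → C y → C (x + y)) :
    ∀ x ∈ GSec 𝒜 ℳ S, C x := by
  intro x hx
  rw [GSec, sSup_eq_iSup'] at hx
  exact Submodule.iSup_induction _ (motive := C) hx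
    (fun N y hy => hmem N.1 N.2.1 N.2.2 y hy) h0 hadd

lemma psmul_GSec_le {S L : Submodule Γ M} {a : Γ}
    (h : ∀ N : Submodule Γ M, IsGrSecond 𝒜 ℳ N → N ≤ S → a • N ≤ L) :
    a • GSec 𝒜 ℳ S ≤ L := by
  rw [psmul_le_iff]
  exact GSec_induction 𝒜 ℳ
    (fun N h1 h2 x hx => psmul_le_iff.1 (h N h1 h2) x hx)
    (by simp)
    (fun x y hx hy => by rw [smul_add]; exact Submodule.add_mem _ hx hy)

lemma mem_ann_GSec {S : Submodule Γ M} {r : Γ}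
    (h : ∀ N : Submodule Γ M, IsGrSecond 𝒜 ℳ N → N ≤ S → r ∈ N.annihilator) :
    r ∈ (GSec 𝒜 ℳ S).annihilator := by
  rw [Submodule.mem_annihilator]
  exact GSec_induction 𝒜 ℳ
    (fun N h1 h2 x hx => Submodule.mem_annihilator.1 (h N h1 h2) x hx)
    (smul_zero r)
    (fun x y hx hy => by rw [smul_add, hx, hy, add_zero])

lemma GSec_graded {S : Submodule Γ M} : IsGradedSubmodule ℳ (GSec 𝒜 ℳ S) := by
  intro g x hx
  refine GSec_induction 𝒜 ℳ (C := fun y => (DirectSum.decompose ℳ y g : M) ∈ GSec 𝒜 ℳ S)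
    (fun N h1 h2 y hy => le_GSec 𝒜 ℳ h1 h2 (h1.2.1 g hy)) (by simp) ?_ x hx
  intro y z hy hz
  have e : (decompose ℳ (y + z) g : M)
      = (decompose ℳ y g : M) + (decompose ℳ z g : M) := by
    rw [DirectSum.decompose_add, DirectSum.add_apply]
    rfl
  rw [e]
  exact Submodule.add_mem _ hy hz

end GSecLemmas

section CoreLemma

lemma core_lemma
    (hcomul : ∀ N : Submodule Γ M, IsGradedSubmodule ℳ N →
      N = Submodule.torsionBySet Γ M (N.annihilator : Set Γ))
    (hsurj : ∀ P : Ideal Γ, IsGradedPrime 𝒜 P →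
      (⊤ : Submodule Γ M).annihilator ≤ P →
      ∃ N : Submodule Γ M, IsGrSecond 𝒜 ℳ N ∧ N.annihilator = P)
    {S : Submodule Γ M} (hSgr : IsGradedSubmodule ℳ S)
    {a b : Γ} (ha : SetLike.IsHomogeneousElem 𝒜 a) (hb : SetLike.IsHomogeneousElem 𝒜 b)
    {N₁ : Submodule Γ M} (hN₁ : IsGrSecond 𝒜 ℳ N₁) (hN₁S : N₁ ≤ S)
    (haN₁ : a • N₁ = N₁)
    (heq : a • S = (a * b) • S)
    {L : Submodule Γ M} (habL : (a * b) • GSec 𝒜 ℳ S ≤ L) :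
    N₁ ≤ L := by
  have hone : (1:Γ) ∉ N₁.annihilator := second_one_not_mem hN₁.1
  have haAnn : a ∉ N₁.annihilator := by
    intro h
    exact hN₁.1 (by rw [← haN₁, smul_eq_bot_of_mem_ann h])
  have hpow : ∀ k : ℕ, (a ^ k) • S = ((a * b) ^ k) • S := by
    intro k
    induction k with
    | zero => simp
    | succ k ih =>
      calc a ^ (k+1) • S = a ^ k • (a • S) := by rw [pow_succ, mul_smul]
        _ = a ^ k • ((a*b) • S) := by rw [heq]
        _ = (a*b) • (a ^ k • S) := by rw [← mul_smul, mul_comm, mul_smul]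
        _ = (a*b) • ((a*b) ^ k • S) := by rw [ih]
        _ = (a*b) ^ (k+1) • S := by rw [← mul_smul, ← pow_succ']
  set T : Set Γ := {x | ∃ k : ℕ, ∃ t : Γ, SetLike.IsHomogeneousElem 𝒜 t ∧
    t ∉ N₁.annihilator ∧ (a*b)^k * t = x} with hT
  have hTh : ∀ t ∈ T, SetLike.IsHomogeneousElem 𝒜 t := by
    rintro x ⟨k, t, hth, htn, rfl⟩
    exact SetLike.IsHomogeneousElem.mul (hom_pow 𝒜 (SetLike.IsHomogeneousElem.mul ha hb) k) hth
  have hT1 : (1:Γ) ∈ T := ⟨0, 1, SetLike.isHomogeneousElem_one 𝒜, hone, by simp⟩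
  have hTm : ∀ t₁ ∈ T, ∀ t₂ ∈ T, t₁ * t₂ ∈ T := by
    rintro _ ⟨k, t, hth, htn, rfl⟩ _ ⟨l, u, huh, hun, rfl⟩
    refine ⟨k + l, t * u, SetLike.IsHomogeneousElem.mul hth huh, ?_, by rw [pow_add]; ring⟩
    intro h
    rcases second_ann_prime 𝒜 ℳ hN₁ hth huh h with h | h
    exacts [htn h, hun h]
  have hTI : ∀ t ∈ T, t ∉ S.annihilator := by
    rintro _ ⟨k, t, hth, htn, rfl⟩ hmem
    have hta : t * a ^ k ∈ S.annihilator := by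
      rw [Submodule.mem_annihilator]
      intro m hm
      have h1 : (a ^ k) • m ∈ (a ^ k) • S := Submodule.smul_mem_pointwise_smul m _ S hm
      rw [hpow k] at h1
      obtain ⟨m', hm', hmeq⟩ := mem_psmul.1 h1
      calc (t * a ^ k) • m = t • ((a ^ k) • m) := by rw [mul_smul]
        _ = t • (((a*b)^k) • m') := by rw [hmeq]
        _ = (t * (a*b)^k) • m' := (mul_smul _ _ _).symm
        _ = ((a*b)^k * t) • m' := by rw [mul_comm]
        _ = 0 := Submodule.mem_annihilator.1 hmem m' hm'
    have h2 : t * a ^ k ∈ N₁.annihilator := ann_mono hN₁S hta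
    rcases second_ann_prime 𝒜 ℳ hN₁ hth (hom_pow 𝒜 ha k) h2 with h | h
    · exact htn h
    · exact haAnn (second_ann_pow_prime 𝒜 ℳ hN₁ ha k h)
  obtain ⟨P, hPpr, hSP, hPT⟩ := exists_graded_prime 𝒜 (S.annihilator)
    (isGradedIdeal_annihilator 𝒜 ℳ hSgr) T hTh hT1 hTm hTI
  have hPN₁ : P ≤ N₁.annihilator := by
    refine le_of_homogeneous_le 𝒜 hPpr.1 ?_
    intro x hx hxP
    by_contra hxn
    exact hPT x ⟨0, x, hx, hxn, by simp⟩ hxP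
  have habP : a * b ∉ P :=
    hPT _ ⟨1, 1, SetLike.isHomogeneousElem_one 𝒜, hone, by simp⟩
  obtain ⟨N', hN'sec, hN'ann⟩ := hsurj P hPpr (le_trans (ann_mono le_top) hSP)
  have hN'eq : N' = Submodule.torsionBySet Γ M (P : Set Γ) := by
    rw [hcomul N' hN'sec.2.1, hN'ann]
  have hN'S : N' ≤ S := by
    rw [hN'eq, hcomul S hSgr]
    exact Submodule.torsionBySet_le_torsionBySet_of_subset hSP
  have hN₁N' : N₁ ≤ N' := by
    rw [hN'eq, hcomul N₁ hN₁.2.1]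
    exact Submodule.torsionBySet_le_torsionBySet_of_subset hPN₁
  have habN' : (a * b) • N' = N' := by
    refine second_smul_eq 𝒜 ℳ hN'sec (SetLike.IsHomogeneousElem.mul ha hb) ?_
    rw [hN'ann]
    exact habP
  calc N₁ ≤ N' := hN₁N'
    _ = (a * b) • N' := habN'.symm
    _ ≤ (a * b) • GSec 𝒜 ℳ S := psmul_mono (le_GSec 𝒜 ℳ hN'sec hN'S)
    _ ≤ L := habL

end CoreLemma

/-- If `M` is a gr-comultiplication module whose natural map on the graded second
spectrum is surjective, and `S` is a gr-C-2^A-secondary submodule of `M`, then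
`GSec S` is a gr-S-2^A-second submodule of `M`. -/
theorem stmt6
    (hcomul : ∀ N : Submodule Γ M, IsGradedSubmodule ℳ N →
      N = Submodule.torsionBySet Γ M (N.annihilator : Set Γ))
    (hsurj : ∀ P : Ideal Γ, IsGradedPrime 𝒜 P →
      (⊤ : Submodule Γ M).annihilator ≤ P →
      ∃ N : Submodule Γ M, IsGrSecond 𝒜 ℳ N ∧ N.annihilator = P)
    (S : Submodule Γ M) (hS : IsGrC2ASecondary 𝒜 ℳ S) :
    IsGrS2ASecond 𝒜 ℳ (GSec 𝒜 ℳ S) := by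
  have hSgr := hS.2.1
  refine ⟨?_, GSec_graded 𝒜 ℳ, ?_⟩
  · -- GSec is nonzero
    have hannS : (1:Γ) ∉ S.annihilator := by
      intro h
      apply hS.1
      rw [eq_bot_iff]
      intro s hs
      have h1 := Submodule.mem_annihilator.1 h s hs
      rw [one_smul] at h1
      exact (Submodule.mem_bot Γ).2 h1
    obtain ⟨P, hPpr, hSP, hPT⟩ := exists_graded_prime 𝒜 S.annihilator
      (isGradedIdeal_annihilator 𝒜 ℳ hSgr) ({1} : Set Γ)
      (by
        intro t ht
        rw [Set.mem_singleton_iff] at ht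
        subst ht
        exact SetLike.isHomogeneousElem_one 𝒜)
      rfl
      (by
        intro t₁ ht₁ t₂ ht₂
        rw [Set.mem_singleton_iff] at ht₁ ht₂
        subst ht₁; subst ht₂
        simp)
      (by
        intro t ht
        rw [Set.mem_singleton_iff] at ht
        subst ht
        exact hannS)
    obtain ⟨N, hNsec, hNann⟩ := hsurj P hPpr (le_trans (ann_mono le_top) hSP)
    have hNS : N ≤ S := by
      rw [hcomul N hNsec.2.1, hNann, hcomul S hSgr]
      exact Submodule.torsionBySet_le_torsionBySet_of_subset hSP
    intro hbot
    apply hNsec.1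
    rw [eq_bot_iff, ← hbot]
    exact le_GSec 𝒜 ℳ hNsec hNS
  · intro a b ha hb V₁ V₂ hV₁ hV₂ hab
    set L := V₁ ⊓ V₂ with hLdef
    by_cases hA : a • GSec 𝒜 ℳ S ≤ L
    · exact Or.inl hA
    by_cases hB : b • GSec 𝒜 ℳ S ≤ L
    · exact Or.inr (Or.inl hB)
    refine Or.inr (Or.inr ?_)
    obtain ⟨N₁, hN₁sec, hN₁S, hN₁L⟩ :
        ∃ N₁ : Submodule Γ M, IsGrSecond 𝒜 ℳ N₁ ∧ N₁ ≤ S ∧ ¬ a • N₁ ≤ L := by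
      by_contra h
      push_neg at h
      exact hA (psmul_GSec_le 𝒜 ℳ (fun N h1 h2 => h N h1 h2))
    obtain ⟨N₂, hN₂sec, hN₂S, hN₂L⟩ :
        ∃ N₂ : Submodule Γ M, IsGrSecond 𝒜 ℳ N₂ ∧ N₂ ≤ S ∧ ¬ b • N₂ ≤ L := by
      by_contra h
      push_neg at h
      exact hB (psmul_GSec_le 𝒜 ℳ (fun N h1 h2 => h N h1 h2))
    have haN₁ : a • N₁ = N₁ := by
      rcases hN₁sec.2.2 a ha with h | h
      · exact h
      · exact absurd (by rw [h]; exact bot_le) hN₁L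
    have hbN₂ : b • N₂ = N₂ := by
      rcases hN₂sec.2.2 b hb with h | h
      · exact h
      · exact absurd (by rw [h]; exact bot_le) hN₂L
    by_cases hH : grMem S.annihilator (a * b)
    · obtain ⟨n, hn, hpw⟩ := hH
      refine mem_ann_GSec 𝒜 ℳ (fun N h1 h2 => ?_)
      exact second_ann_pow_prime 𝒜 ℳ h1 (SetLike.IsHomogeneousElem.mul ha hb) n
        (ann_mono h2 hpw)
    · exfalso
      rcases hS.2.2 a b ha hb ((a * b) • S)
          (isGradedSubmodule_psmul 𝒜 ℳ (SetLike.IsHomogeneousElem.mul ha hb) hSgr) le_rfl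
        with hcase | hcase | hcase
      · have hle2 : (a * b) • S ≤ a • S := by
          rw [mul_comm, mul_smul]
          exact Submodule.smul_le_self_of_tower b (a • S)
        have heq : a • S = (a * b) • S := le_antisymm hcase hle2
        have hfin := core_lemma 𝒜 ℳ hcomul hsurj hSgr ha hb hN₁sec hN₁S haN₁ heq hab
        exact hN₁L (by rw [haN₁]; exact hfin)
      · have hle2 : (a * b) • S ≤ b • S := by
          rw [mul_smul]
          exact Submodule.smul_le_self_of_tower a (b • S)
        have heq : b • S = (b * a) • S := by
          rw [mul_comm]
          exact le_antisymm hcase hle2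
        have hab' : (b * a) • GSec 𝒜 ℳ S ≤ L := by
          rw [mul_comm]
          exact hab
        have hfin := core_lemma 𝒜 ℳ hcomul hsurj hSgr hb ha hN₂sec hN₂S hbN₂ heq hab'
        exact hN₂L (by rw [hbN₂]; exact hfin)
      · exact hH hcase
end

section
/- Let S be a gr-C-2^A-secondary submodule of M. Then for every homogeneous element r ∈ Γ with r ∉ Gr(Ann_Γ(S)), one has rS = r²S. -/
open Pointwise DirectSum

variable {G : Type*} [AddGroup G] [DecidableEq G]
variable {Γ : Type*} [CommRing Γ]
variable {M : Type*} [AddCommGroup M] [Module Γ M]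
variable (𝒜 : G → AddSubgroup Γ) (ℳ : G → AddSubgroup M)
variable [GradedRing 𝒜] [DirectSum.Decomposition ℳ] [SetLike.GradedSMul 𝒜 ℳ]

lemma aux_mem_smul_iff {a : Γ} {S : Submodule Γ M} {x : M} :
    x ∈ a • S ↔ ∃ m ∈ S, a • m = x := Submodule.mem_map

lemma decompose_homog_smul (a : Γ) (i : G) (ha : a ∈ 𝒜 i) (x : M) (j : G) :
    (DirectSum.decompose ℳ (a • x) (i + j) : M) = a • (DirectSum.decompose ℳ x j : M) := by
  induction x using DirectSum.Decomposition.inductionOn ℳ with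
  | zero => simp
  | @homogeneous k m =>
    have hm : (m : M) ∈ ℳ k := m.2
    by_cases hkj : k = j
    · subst hkj
      rw [DirectSum.decompose_of_mem_same ℳ hm,
        DirectSum.decompose_of_mem_same ℳ
          (show a • (m : M) ∈ ℳ (i + k) from SetLike.GradedSMul.smul_mem ha hm)]
    · rw [DirectSum.decompose_of_mem_ne ℳ hm hkj,
        DirectSum.decompose_of_mem_ne ℳ
          (show a • (m : M) ∈ ℳ (i + k) from SetLike.GradedSMul.smul_mem ha hm)
          (fun h => hkj (add_left_cancel h)) (i := i + k), smul_zero]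
  | add x y hx hy =>
    rw [smul_add, DirectSum.decompose_add, DirectSum.decompose_add,
      DirectSum.add_apply, DirectSum.add_apply, AddSubgroup.coe_add, AddSubgroup.coe_add,
      hx, hy, smul_add]

lemma graded_smul (a : Γ) (ha : SetLike.IsHomogeneousElem 𝒜 a) (S : Submodule Γ M)
    (hSg : IsGradedSubmodule ℳ S) : IsGradedSubmodule ℳ (a • S) := by
  obtain ⟨i, hai⟩ := ha
  intro g x hx
  obtain ⟨m, hm, rfl⟩ := aux_mem_smul_iff.mp hx
  have hg : g = i + (-i + g) := (add_neg_cancel_left i g).symm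
  rw [hg, decompose_homog_smul 𝒜 ℳ a i hai m (-i + g)]
  exact Submodule.smul_mem_pointwise_smul _ _ _ (hSg _ hm)

/-- If `S` is a gr-C-2^A-secondary submodule of `M`, then `r • S = r² • S` for every
homogeneous `r` not in `Gr(Ann S)`. -/
theorem stmt7 (S : Submodule Γ M) (hS : IsGrC2ASecondary 𝒜 ℳ S)
    (r : Γ) (hr : SetLike.IsHomogeneousElem 𝒜 r) (hr' : ¬ grMem S.annihilator r) :
    r • S = (r ^ 2) • S := by
  obtain ⟨-, hSg, h⟩ := hS
  have hle : (r ^ 2) • S ≤ r • S := by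
    intro x hx
    obtain ⟨m, hm, rfl⟩ := aux_mem_smul_iff.mp hx
    rw [sq, mul_smul]
    exact Submodule.smul_mem_pointwise_smul _ _ _ (S.smul_mem r hm)
  have hL : IsGradedSubmodule ℳ ((r ^ 2) • S) := graded_smul 𝒜 ℳ _ (by
    obtain ⟨i, hi⟩ := hr; exact ⟨i + i, by rw [sq]; exact SetLike.mul_mem_graded hi hi⟩) S hSg
  have hsub : (r * r) • S ≤ (r ^ 2) • S := by rw [← sq]
  rcases h r r hr hr _ hL hsub with h1 | h1 | h1
  · exact le_antisymm h1 hle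
  · exact le_antisymm h1 hle
  · exfalso
    obtain ⟨n, hn, hmem⟩ := h1
    refine hr' ⟨2 * n, by positivity, ?_⟩
    have : r ^ (2 * n) = (r * r) ^ n := by rw [pow_mul, sq]
    rwa [this]
end

section
/- Let S be a gr-C-2^A-secondary submodule of M and let I be a graded ideal of Γ with I ⊄ Ann_Γ(S). Then IS is a gr-C-2^A-secondary submodule of M. -/
open Pointwise DirectSum

section AuxHelpers

variable {G : Type*} [AddGroup G] [DecidableEq G]
variable {Γ : Type*} [CommRing Γ]
variable {M : Type*} [AddCommGroup M] [Module Γ M]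
variable (𝒜 : G → AddSubgroup Γ) (ℳ : G → AddSubgroup M)
variable [GradedRing 𝒜] [DirectSum.Decomposition ℳ] [SetLike.GradedSMul 𝒜 ℳ]

/-- The degree-`g` component map as an additive monoid hom `M →+ M`. -/
noncomputable def componentHom (g : G) : M →+ M where
  toFun m := (DirectSum.decompose ℳ m g : M)
  map_zero' := by simp
  map_add' x y := by simp

@[simp] lemma componentHom_apply (g : G) (m : M) :
    componentHom ℳ g m = (DirectSum.decompose ℳ m g : M) := rfl

/-- Components of a homogeneous-scalar multiple. -/
lemma decompose_smul_of_mem {i : G} {a : Γ} (ha : a ∈ 𝒜 i) (m : M) (g : G) :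
    (DirectSum.decompose ℳ (a • m) g : M) = a • (DirectSum.decompose ℳ m (-i + g) : M) := by
  induction m using DirectSum.Decomposition.inductionOn ℳ with
  | zero => simp
  | @homogeneous h m =>
      have hsm : a • (m : M) ∈ ℳ (i + h) := by
        have := SetLike.GradedSMul.smul_mem ha m.2
        rwa [vadd_eq_add] at this
      by_cases hg : g = i + h
      · subst hg
        rw [DirectSum.decompose_of_mem_same ℳ hsm, neg_add_cancel_left,
          DirectSum.decompose_of_mem_same ℳ m.2]
      · rw [DirectSum.decompose_of_mem_ne ℳ hsm (fun h' => hg h'.symm),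
          DirectSum.decompose_of_mem_ne ℳ m.2 (fun h' => hg ?_), smul_zero]
        rw [h', add_neg_cancel_left]
  | add x y hx hy =>
      have h1 := map_add (componentHom ℳ g) (a • x) (a • y)
      have h2 := map_add (componentHom ℳ (-i + g)) x y
      simp only [componentHom_apply] at h1 h2
      rw [smul_add, h1, h2, hx, hy, smul_add]

/-- Components of elements of `I • S` stay in `I • S` when `I` is a graded ideal and `S`
a graded submodule. -/
lemma decompose_smul_mem (I : Ideal Γ) (hI : IsGradedIdeal 𝒜 I) {S : Submodule Γ M}
    (hSg : IsGradedSubmodule ℳ S) {a : Γ} (haI : a ∈ I) {m : M} (hm : m ∈ S) (g : G) :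
    (DirectSum.decompose ℳ (a • m) g : M) ∈ I • S := by
  classical
  have key : (DirectSum.decompose ℳ (a • m) g : M)
      = ∑ i ∈ (DirectSum.decompose 𝒜 a).support,
          (DirectSum.decompose ℳ ((DirectSum.decompose 𝒜 a i : Γ) • m) g : M) := by
    conv_lhs => rw [← DirectSum.sum_support_decompose 𝒜 a, Finset.sum_smul]
    exact map_sum (componentHom ℳ g) _ _
  rw [key]
  refine Submodule.sum_mem _ fun i _ => ?_
  rw [decompose_smul_of_mem 𝒜 ℳ (SetLike.coe_mem _) m g]
  exact Submodule.smul_mem_smul (hI i haI) (hSg _ hm)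

/-- If `b • m ∈ L` for all `b ∈ I` and `L` is graded, then
`a • (components of m) ∈ L` for all `a ∈ I`. -/
lemma smul_decompose_mem_of_graded {L : Submodule Γ M} (hL : IsGradedSubmodule ℳ L)
    (I : Ideal Γ) (hI : IsGradedIdeal 𝒜 I) {a : Γ} (haI : a ∈ I) {m : M}
    (hm : ∀ b ∈ I, b • m ∈ L) (g : G) :
    a • (DirectSum.decompose ℳ m g : M) ∈ L := by
  classical
  have key : a • (DirectSum.decompose ℳ m g : M)
      = ∑ i ∈ (DirectSum.decompose 𝒜 a).support,
          (DirectSum.decompose 𝒜 a i : Γ) • (DirectSum.decompose ℳ m g : M) := by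
    conv_lhs => rw [← DirectSum.sum_support_decompose 𝒜 a, Finset.sum_smul]
  rw [key]
  refine Submodule.sum_mem _ fun i _ => ?_
  have h1 : (DirectSum.decompose 𝒜 a i : Γ) • (DirectSum.decompose ℳ m g : M)
      = (DirectSum.decompose ℳ ((DirectSum.decompose 𝒜 a i : Γ) • m) (i + g) : M) := by
    rw [decompose_smul_of_mem 𝒜 ℳ (SetLike.coe_mem _) m (i + g), neg_add_cancel_left]
  rw [h1]
  exact hL _ (hm _ (hI i haI))

/-- The submodule `{m | ∀ a ∈ I, a • m ∈ L}`. -/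
def colonSub (I : Ideal Γ) (L : Submodule Γ M) : Submodule Γ M where
  carrier := {m | ∀ a ∈ I, a • m ∈ L}
  add_mem' hx hy a ha := by rw [smul_add]; exact L.add_mem (hx a ha) (hy a ha)
  zero_mem' a _ := by rw [smul_zero]; exact L.zero_mem
  smul_mem' c m hm a ha := by
    rw [smul_comm]; exact L.smul_mem c (hm a ha)

lemma mem_colonSub {I : Ideal Γ} {L : Submodule Γ M} {m : M} :
    m ∈ colonSub I L ↔ ∀ a ∈ I, a • m ∈ L := Iff.rfl

end AuxHelpers

variable {G : Type*} [AddGroup G] [DecidableEq G]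
variable {Γ : Type*} [CommRing Γ]
variable {M : Type*} [AddCommGroup M] [Module Γ M]
variable (𝒜 : G → AddSubgroup Γ) (ℳ : G → AddSubgroup M)
variable [GradedRing 𝒜] [DirectSum.Decomposition ℳ] [SetLike.GradedSMul 𝒜 ℳ]

/-- If `S` is a gr-C-2^A-secondary submodule of `M` and `I` is a graded ideal of `Γ`
with `I ⊄ Ann S`, then `I • S` is a gr-C-2^A-secondary submodule of `M`. -/
theorem stmt9 (S : Submodule Γ M) (hS : IsGrC2ASecondary 𝒜 ℳ S)
    (I : Ideal Γ) (hI : IsGradedIdeal 𝒜 I) (hIS : ¬ I ≤ S.annihilator) :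
    IsGrC2ASecondary 𝒜 ℳ (I • S) := by
  classical
  obtain ⟨hS0, hSg, hSmain⟩ := hS
  refine ⟨?_, ?_, ?_⟩
  · -- I • S ≠ ⊥
    intro h
    apply hIS
    intro a haI
    rw [Submodule.mem_annihilator]
    intro x hx
    have hmem : a • x ∈ I • S := Submodule.smul_mem_smul haI hx
    rw [h] at hmem
    simpa using hmem
  · -- I • S is graded
    intro g x hx
    refine Submodule.smul_induction_on hx (fun a haI n hn => ?_) (fun x y hx' hy' => ?_)
    · exact decompose_smul_mem 𝒜 ℳ I hI hSg haI hn g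
    · have h1 := map_add (componentHom ℳ g) x y
      simp only [componentHom_apply] at h1
      rw [h1]
      exact Submodule.add_mem _ hx' hy'
  · intro r s hr hs L hL hrs
    have hL' : IsGradedSubmodule ℳ (colonSub I L) := by
      intro g m hm
      rw [mem_colonSub] at hm ⊢
      intro a ha
      exact smul_decompose_mem_of_graded 𝒜 ℳ hL I hI ha hm g
    have hsub : (r * s) • S ≤ colonSub I L := by
      intro x hx
      obtain ⟨y, hy, rfl⟩ := Set.mem_smul_set.mp hx
      rw [mem_colonSub]
      intro a ha
      rw [smul_comm]
      exact hrs (Submodule.smul_mem_pointwise_smul _ _ _ (Submodule.smul_mem_smul ha hy))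
    rcases hSmain r s hr hs (colonSub I L) hL' hsub with h | h | h
    · left
      intro x hx
      obtain ⟨y, hy, rfl⟩ := Set.mem_smul_set.mp hx
      refine Submodule.smul_induction_on hy (fun a haI n hn => ?_) (fun u v hu hv => ?_)
      · have hrn : r • n ∈ colonSub I L :=
          h (Submodule.smul_mem_pointwise_smul _ _ _ hn)
        have := (mem_colonSub.mp hrn) a haI
        rwa [smul_comm] at this
      · rw [smul_add]; exact L.add_mem hu hv
    · right; left
      intro x hx
      obtain ⟨y, hy, rfl⟩ := Set.mem_smul_set.mp hx
      refine Submodule.smul_induction_on hy (fun a haI n hn => ?_) (fun u v hu hv => ?_)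
      · have hsn : s • n ∈ colonSub I L :=
          h (Submodule.smul_mem_pointwise_smul _ _ _ hn)
        have := (mem_colonSub.mp hsn) a haI
        rwa [smul_comm] at this
      · rw [smul_add]; exact L.add_mem hu hv
    · right; right
      obtain ⟨n, hn, hmem⟩ := h
      refine ⟨n, hn, ?_⟩
      rw [Submodule.mem_annihilator] at hmem ⊢
      intro x hx
      exact hmem x (Submodule.smul_le_right hx)
end

section
/- Let M be a gr-multiplication Γ-module which is a gr-C-2^A-secondary module (i.e., M is a gr-C-2^A-secondary submodule of itself). Then every nonzero graded submodule of M is a gr-C-2^A-secondary submodule of M. -/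
open Pointwise DirectSum

variable {G : Type*} [AddGroup G] [DecidableEq G]
variable {Γ : Type*} [CommRing Γ]
variable {M : Type*} [AddCommGroup M] [Module Γ M]
variable (𝒜 : G → AddSubgroup Γ) (ℳ : G → AddSubgroup M)
variable [GradedRing 𝒜] [DirectSum.Decomposition ℳ] [SetLike.GradedSMul 𝒜 ℳ]

/-- Decomposition of a homogeneous scalar multiple. -/
lemma aux_decompose_smul_s10 {h : G} {k : Γ} (hk : k ∈ 𝒜 h) (m : M) (g : G) :
    (DirectSum.decompose ℳ (k • m) (h + g) : M) = k • (DirectSum.decompose ℳ m g : M) := by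
  induction m using DirectSum.Decomposition.inductionOn ℳ with
  | zero => simp
  | @homogeneous i m =>
      obtain ⟨m, hm⟩ := m
      have hkm : k • m ∈ ℳ (h + i) := SetLike.GradedSMul.smul_mem hk hm
      by_cases hig : i = g
      · subst hig
        rw [DirectSum.decompose_of_mem_same ℳ hm, DirectSum.decompose_of_mem_same ℳ hkm]
      · rw [DirectSum.decompose_of_mem_ne ℳ hm hig,
          DirectSum.decompose_of_mem_ne ℳ hkm (by simpa using hig), smul_zero]
  | add x y hx hy =>
      rw [smul_add, DirectSum.decompose_add, DirectSum.decompose_add]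
      simp only [DirectSum.add_apply, AddSubgroup.coe_add, hx, hy, smul_add]

/-- If every homogeneous element of a graded ideal `K` sends `m` into `L`, so does every
element of `K`. -/
lemma aux_graded_ideal_smul {K : Ideal Γ} (hKgr : IsGradedIdeal 𝒜 K) {L : Submodule Γ M}
    {m : M} (hm : ∀ k ∈ K, SetLike.IsHomogeneousElem 𝒜 k → k • m ∈ L) :
    ∀ k ∈ K, k • m ∈ L := by
  intro k hk
  classical
  rw [← DirectSum.sum_support_decompose 𝒜 k, Finset.sum_smul]
  refine Submodule.sum_mem _ fun i _ => ?_
  exact hm _ (hKgr i hk) ⟨i, SetLike.coe_mem _⟩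

/-- If `M` is a gr-multiplication module which is gr-C-2^A-secondary (as a submodule of
itself), then every nonzero graded submodule of `M` is a gr-C-2^A-secondary submodule. -/
theorem stmt10
    (hmul : ∀ N : Submodule Γ M, IsGradedSubmodule ℳ N →
      ∃ K : Ideal Γ, IsGradedIdeal 𝒜 K ∧ N = K • (⊤ : Submodule Γ M))
    (hM : IsGrC2ASecondary 𝒜 ℳ (⊤ : Submodule Γ M)) :
    ∀ S : Submodule Γ M, S ≠ ⊥ → IsGradedSubmodule ℳ S →
      IsGrC2ASecondary 𝒜 ℳ S := by
  intro S hS hSgr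
  refine ⟨hS, hSgr, ?_⟩
  intro r s hr hs L hLgr hrsS
  obtain ⟨K, hKgr, hSK⟩ := hmul S hSgr
  classical
  -- the "colon" submodule of elements sent into `L` by every homogeneous element of `K`
  set S' : Submodule Γ M :=
    ⨅ (k : Γ) (_ : k ∈ K) (_ : SetLike.IsHomogeneousElem 𝒜 k), L.comap (LinearMap.lsmul Γ M k)
    with hS'def
  have mem_S' : ∀ m : M, m ∈ S' ↔ ∀ k ∈ K, SetLike.IsHomogeneousElem 𝒜 k → k • m ∈ L := by
    intro m
    simp [hS'def, Submodule.mem_iInf]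
  -- S' is graded
  have hS'gr : IsGradedSubmodule ℳ S' := by
    intro g m hm
    rw [mem_S'] at hm ⊢
    rintro k hkK ⟨h, hkh⟩
    have : (DirectSum.decompose ℳ (k • m) (h + g) : M) ∈ L := hLgr _ (hm k hkK ⟨h, hkh⟩)
    rwa [aux_decompose_smul_s10 𝒜 ℳ hkh] at this
  -- (r*s) • ⊤ ≤ S'
  have h1 : (r * s) • (⊤ : Submodule Γ M) ≤ S' := by
    rintro x hx
    rw [← SetLike.mem_coe, Submodule.coe_pointwise_smul, Set.mem_smul_set] at hx
    obtain ⟨m, -, rfl⟩ := hx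
    rw [mem_S']
    intro k hkK hkh
    have hkm : k • m ∈ S := by
      rw [hSK]; exact Submodule.smul_mem_smul hkK trivial
    have : (r * s) • (k • m) ∈ L := hrsS (Submodule.smul_mem_pointwise_smul _ _ _ hkm)
    rwa [smul_comm] at this
  -- transfer `t • ⊤ ≤ S'` to `t • S ≤ L`
  have transfer : ∀ t : Γ, t • (⊤ : Submodule Γ M) ≤ S' → t • S ≤ L := by
    intro t ht x hx
    rw [← SetLike.mem_coe, Submodule.coe_pointwise_smul, Set.mem_smul_set] at hx
    obtain ⟨y, hyS, rfl⟩ := hx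
    rw [hSK] at hyS
    refine Submodule.smul_induction_on hyS (fun k hkK m _ => ?_) (fun a b ha hb => ?_)
    · have hm : t • m ∈ S' := ht (Submodule.smul_mem_pointwise_smul _ _ _ trivial)
      rw [mem_S'] at hm
      have := aux_graded_ideal_smul 𝒜 hKgr hm k hkK
      rwa [smul_comm] at this
    · rw [smul_add]; exact L.add_mem ha hb
  rcases hM.2.2 r s hr hs S' hS'gr h1 with h | h | ⟨n, hn, hmem⟩
  · exact Or.inl (transfer r h)
  · exact Or.inr (Or.inl (transfer s h))
  · exact Or.inr (Or.inr ⟨n, hn, Submodule.annihilator_mono le_top hmem⟩)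
end

section
/- Let M and M' be G-graded Γ-modules and let ψ : M → M' be a graded Γ-monomorphism, i.e., an injective Γ-linear map with ψ(M_g) ⊆ M'_g for all g ∈ G. If S is a gr-C-2^A-secondary submodule of M, then ψ(S) is a gr-C-2^A-secondary submodule of M'. -/
open Pointwise DirectSum

variable {G : Type*} [AddGroup G] [DecidableEq G]
variable {Γ : Type*} [CommRing Γ]
variable {M : Type*} [AddCommGroup M] [Module Γ M]
variable {M' : Type*} [AddCommGroup M'] [Module Γ M']
variable (𝒜 : G → AddSubgroup Γ) (ℳ : G → AddSubgroup M) (ℳ' : G → AddSubgroup M')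
variable [GradedRing 𝒜] [DirectSum.Decomposition ℳ] [SetLike.GradedSMul 𝒜 ℳ]
variable [DirectSum.Decomposition ℳ'] [SetLike.GradedSMul 𝒜 ℳ']

/-- A graded map commutes with taking homogeneous components. -/
lemma decompose_map_aux (ψ : M →ₗ[Γ] M')
    (hgr : ∀ (g : G) (x : M), x ∈ ℳ g → ψ x ∈ ℳ' g) (x : M) (g : G) :
    (DirectSum.decompose ℳ' (ψ x) g : M') = ψ (DirectSum.decompose ℳ x g : M) := by
  induction x using DirectSum.Decomposition.inductionOn ℳ with
  | zero => simp
  | @homogeneous i m =>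
      by_cases h : i = g
      · subst h
        rw [DirectSum.decompose_of_mem_same ℳ m.2,
          DirectSum.decompose_of_mem_same ℳ' (hgr i m m.2)]
      · rw [DirectSum.decompose_of_mem_ne ℳ m.2 h,
          DirectSum.decompose_of_mem_ne ℳ' (hgr i m m.2) h, map_zero]
  | add a b ha hb =>
      rw [map_add, DirectSum.decompose_add, DirectSum.decompose_add]
      simp only [DirectSum.add_apply, AddSubgroup.coe_add, map_add, ha, hb]

/-- If `ψ : M → M'` is a graded monomorphism and `S` is a gr-C-2^A-secondary submodule
of `M`, then `ψ(S)` is a gr-C-2^A-secondary submodule of `M'`. -/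
theorem stmt11 (ψ : M →ₗ[Γ] M') (hinj : Function.Injective ψ)
    (hgr : ∀ (g : G) (x : M), x ∈ ℳ g → ψ x ∈ ℳ' g)
    (S : Submodule Γ M) (hS : IsGrC2ASecondary 𝒜 ℳ S) :
    IsGrC2ASecondary 𝒜 ℳ' (S.map ψ) := by
  obtain ⟨hne, hSgr, hmain⟩ := hS
  refine ⟨?_, ?_, ?_⟩
  · intro h
    apply hne
    rw [Submodule.eq_bot_iff] at h ⊢
    intro x hx
    exact hinj (by simpa using h (ψ x) ⟨x, hx, rfl⟩)
  · rintro g x ⟨m, hm, rfl⟩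
    rw [decompose_map_aux ℳ ℳ' ψ hgr]
    exact ⟨_, hSgr g hm, rfl⟩
  · intro r s hr hs L' hL' hle
    have key : (r * s) • S ≤ L'.comap ψ := by
      rintro _ ⟨m, hm, rfl⟩
      have : (r * s) • ψ m ∈ L' :=
        hle (Submodule.smul_mem_pointwise_smul _ _ _ ⟨m, hm, rfl⟩)
      simpa [Submodule.mem_comap] using this
    have hLgr : IsGradedSubmodule ℳ (L'.comap ψ) := by
      intro g x hx
      simp only [Submodule.mem_comap] at hx ⊢
      rw [← decompose_map_aux ℳ ℳ' ψ hgr]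
      exact hL' g hx
    rcases hmain r s hr hs (L'.comap ψ) hLgr key with h | h | ⟨n, hn, hann⟩
    · left
      rintro _ ⟨_, ⟨m, hm, rfl⟩, rfl⟩
      have := h (Submodule.smul_mem_pointwise_smul m r S hm)
      simpa using this
    · right; left
      rintro _ ⟨_, ⟨m, hm, rfl⟩, rfl⟩
      have := h (Submodule.smul_mem_pointwise_smul m s S hm)
      simpa using this
    · right; right
      refine ⟨n, hn, ?_⟩
      rw [Submodule.mem_annihilator] at hann ⊢
      rintro _ ⟨m, hm, rfl⟩
      rw [← map_smul, hann m hm, map_zero]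
end
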